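/- Let all variables be discrete and suppose ĥ satisfies E[Y | Z, A, X] = E[ĥ(W,A,X) | Z, A, X] a.s. and p̂(A=a|x) = p(a|x), p̂(A=a'|x) = p(a'|x) for all x. Then for arbitrary q̂_a and arbitrary p̂(w|a,x) defining η̂₁(x,a',a) := Σ_w ĥ(w,a',x)·p̂(w|a,x), E[ I(A=a')/p(A=a'|X)·q̂_a(Z,A,X)·(Y − ĥ(W,A,X)) + I(A=a)/p(A=a|X)·(ĥ(W,a',X) − η̂₁(X,a',a)) + η̂₁(X,a',a) ] = E[ I(A=a)/p(A=a|X)·ĥ(W,a',X) ]. -/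

import Mathlib

open Finset
open scoped Classical

noncomputable section

/-- Probability of an event under weights `mu`. -/
def pr {O : Type} [Fintype O] (mu : O -> Real) (s : O -> Prop) : Real :=
  Finset.univ.sum (fun w => if s w then mu w else 0)

/-- Conditional probability `P(s | t)`. -/
def cpr {O : Type} [Fintype O] (mu : O -> Real) (s t : O -> Prop) : Real :=
  pr mu (fun w => s w /\ t w) / pr mu t

/-- Expectation of `f`. -/
def expec {O : Type} [Fintype O] (mu : O -> Real) (f : O -> Real) : Real :=
  Finset.univ.sum (fun w => f w * mu w)

/-- Conditional expectation `E[f | t]`. -/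
def cexp {O : Type} [Fintype O] (mu : O -> Real) (f : O -> Real) (t : O -> Prop) : Real :=
  (Finset.univ.sum (fun w => if t w then f w * mu w else 0)) / pr mu t

lemma pr_nonneg' {O : Type} [Fintype O] (mu : O → ℝ) (hmu0 : ∀ o, 0 ≤ mu o) (s : O → Prop) :
    0 ≤ pr mu s :=
  Finset.sum_nonneg fun o _ => by by_cases h : s o <;> simp [h, hmu0 o]

lemma mu_eq_zero' {O : Type} [Fintype O] (mu : O → ℝ) (hmu0 : ∀ o, 0 ≤ mu o)
    (s : O → Prop) (h : pr mu s = 0) (o : O) (ho : s o) : mu o = 0 := by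
  have h2 := (Finset.sum_eq_zero_iff_of_nonneg
    (fun i (_ : i ∈ Finset.univ) => by by_cases hi : s i <;> simp [hi, hmu0 i])).mp h o (Finset.mem_univ o)
  simpa [ho] using h2

lemma sum_fiber' {O T : Type} [Fintype O] [Fintype T] [DecidableEq T]
    (g : O → T) (f : O → ℝ) :
    ∑ o, f o = ∑ t, ∑ o, (if g o = t then f o else 0) := by
  rw [Finset.sum_comm]
  refine Finset.sum_congr rfl fun o _ => ?_
  rw [Finset.sum_ite_eq]
  simp

lemma partB' {O TA TX : Type} [Fintype O] [Fintype TA] [Fintype TX]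
    [DecidableEq TA] [DecidableEq TX]
    (mu : O → ℝ) (hmu0 : ∀ o, 0 ≤ mu o)
    (A : O → TA) (X : O → TX) (a : TA) (eta : TX → ℝ)
    (hpa : ∀ x, 0 < pr mu (fun o => X o = x) → 0 < pr mu (fun o => A o = a ∧ X o = x)) :
    ∑ o, eta (X o) * (1 - (if A o = a then (1:ℝ) else 0) /
        cpr mu (fun o' => A o' = a) (fun o' => X o' = X o)) * mu o = 0 := by
  rw [sum_fiber' X]
  refine Finset.sum_eq_zero fun x _ => ?_
  have hcong : ∀ o : O, (if X o = x then
      eta (X o) * (1 - (if A o = a then (1:ℝ) else 0) /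
        cpr mu (fun o' => A o' = a) (fun o' => X o' = X o)) * mu o else 0) =
      eta x * (if X o = x then mu o else 0)
      - eta x / cpr mu (fun o' => A o' = a) (fun o' => X o' = x) *
          (if A o = a ∧ X o = x then mu o else 0) := by
    intro o
    by_cases h1 : X o = x
    · by_cases h2 : A o = a <;> simp [h1, h2] <;> ring
    · simp [h1, fun h : A o = a ∧ X o = x => h1 h.2]
  rw [Finset.sum_congr rfl fun o _ => hcong o, Finset.sum_sub_distrib,
    ← Finset.mul_sum, ← Finset.mul_sum]
  have hprX : ∑ o, (if X o = x then mu o else 0) = pr mu (fun o => X o = x) := by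
    unfold pr; exact Finset.sum_congr rfl fun o _ => by congr
  have hprAX : ∑ o, (if A o = a ∧ X o = x then mu o else 0) =
      pr mu (fun o => A o = a ∧ X o = x) := by
    unfold pr; exact Finset.sum_congr rfl fun o _ => by congr
  rw [hprX, hprAX]
  rcases (pr_nonneg' mu hmu0 (fun o => X o = x)).eq_or_lt with h0 | h0
  · have hAX0 : pr mu (fun o => A o = a ∧ X o = x) = 0 := by
      refine Finset.sum_eq_zero fun o _ => ?_
      by_cases h : A o = a ∧ X o = x
      · simp [h, mu_eq_zero' mu hmu0 _ h0.symm o h.2]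
      · simp [h]
    rw [← h0, hAX0]; ring
  · have hAX : 0 < pr mu (fun o => A o = a ∧ X o = x) := hpa x h0
    have hc : cpr mu (fun o' => A o' = a) (fun o' => X o' = x) =
        pr mu (fun o => A o = a ∧ X o = x) / pr mu (fun o => X o = x) := rfl
    rw [hc]
    field_simp
    ring

lemma partA' {O TA TZ TW TX : Type} [Fintype O] [Fintype TA] [Fintype TZ] [Fintype TX]
    [DecidableEq TA] [DecidableEq TZ] [DecidableEq TX]
    (mu : O → ℝ) (hmu0 : ∀ o, 0 ≤ mu o)
    (A : O → TA) (Y : O → ℝ) (Z : O → TZ) (W : O → TW) (X : O → TX)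
    (a' : TA) (hhat : TW → TA → TX → ℝ) (qhat : TZ → TA → TX → ℝ)
    (hbridge : ∀ z x, 0 < pr mu (fun o => Z o = z ∧ A o = a' ∧ X o = x) →
      cexp mu Y (fun o => Z o = z ∧ A o = a' ∧ X o = x) =
      cexp mu (fun o => hhat (W o) a' x) (fun o => Z o = z ∧ A o = a' ∧ X o = x)) :
    ∑ o, (if A o = a' then (1:ℝ) else 0) /
        cpr mu (fun o' => A o' = a') (fun o' => X o' = X o) *
        qhat (Z o) (A o) (X o) * (Y o - hhat (W o) (A o) (X o)) * mu o = 0 := by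
  rw [sum_fiber' (fun o => (Z o, X o))]
  refine Finset.sum_eq_zero fun zx _ => ?_
  obtain ⟨z, x⟩ := zx
  have hcong : ∀ o : O, (if (Z o, X o) = (z, x) then
      (if A o = a' then (1:ℝ) else 0) /
        cpr mu (fun o' => A o' = a') (fun o' => X o' = X o) *
        qhat (Z o) (A o) (X o) * (Y o - hhat (W o) (A o) (X o)) * mu o else 0) =
      qhat z a' x / cpr mu (fun o' => A o' = a') (fun o' => X o' = x) *
        (if Z o = z ∧ A o = a' ∧ X o = x then (Y o - hhat (W o) a' x) * mu o else 0) := by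
    intro o
    by_cases h1 : Z o = z
    · by_cases h2 : X o = x
      · by_cases h3 : A o = a' <;> simp [h1, h2, h3] <;> ring
      · simp [h2, fun h : Z o = z ∧ A o = a' ∧ X o = x => h2 h.2.2]
    · simp [h1, fun h : Z o = z ∧ A o = a' ∧ X o = x => h1 h.1]
  rw [Finset.sum_congr rfl fun o _ => hcong o, ← Finset.mul_sum]
  have hN : ∑ o, (if Z o = z ∧ A o = a' ∧ X o = x then (Y o - hhat (W o) a' x) * mu o else 0)
      = 0 := by
    rcases (pr_nonneg' mu hmu0 (fun o => Z o = z ∧ A o = a' ∧ X o = x)).eq_or_lt with h0 | h0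
    · refine Finset.sum_eq_zero fun o _ => ?_
      by_cases ht : Z o = z ∧ A o = a' ∧ X o = x
      · simp [ht, mu_eq_zero' mu hmu0 _ h0.symm o ht]
      · simp [ht]
    · have hb := hbridge z x h0
      unfold cexp at hb
      have hP : pr mu (fun o => Z o = z ∧ A o = a' ∧ X o = x) ≠ 0 := ne_of_gt h0
      rw [div_eq_div_iff hP hP] at hb
      have hb2 := mul_right_cancel₀ hP hb
      have hsplit : ∀ o : O, (if Z o = z ∧ A o = a' ∧ X o = x then
          (Y o - hhat (W o) a' x) * mu o else 0) =
          (if Z o = z ∧ A o = a' ∧ X o = x then Y o * mu o else 0) -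
          (if Z o = z ∧ A o = a' ∧ X o = x then hhat (W o) a' x * mu o else 0) := by
        intro o; split <;> ring
      rw [Finset.sum_congr rfl fun o _ => hsplit o, Finset.sum_sub_distrib, sub_eq_zero]
      beta_reduce at hb2
      convert hb2 using 2 <;> congr
  rw [hN, mul_zero]

theorem stmt12
    {O TA TM TZ TW TX : Type}
    [Fintype O] [Fintype TA] [Fintype TM] [Fintype TZ] [Fintype TW] [Fintype TX]
    [DecidableEq TA] [DecidableEq TM] [DecidableEq TZ] [DecidableEq TW] [DecidableEq TX]
    (mu : O -> Real) (hmu0 : forall o : O, 0 <= mu o)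
    (hmu1 : Finset.univ.sum mu = 1)
    (A : O -> TA) (Y : O -> Real) (M : O -> TM) (Z : O -> TZ) (W : O -> TW) (X : O -> TX)
    (a a' : TA) (hhat : TW -> TA -> TX -> Real)
    (hbridge : forall (z : TZ) (t : TA) (x : TX),
      0 < pr mu (fun o => Z o = z /\ A o = t /\ X o = x) ->
      cexp mu Y (fun o => Z o = z /\ A o = t /\ X o = x) =
      cexp mu (fun o => hhat (W o) t x) (fun o => Z o = z /\ A o = t /\ X o = x))
    (qhat : TZ -> TA -> TX -> Real) (pwhat : TW -> TX -> Real)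
    (hpa : forall x : TX, 0 < pr mu (fun o => X o = x) ->
      0 < pr mu (fun o => A o = a /\ X o = x))
    (hpa' : forall x : TX, 0 < pr mu (fun o => X o = x) ->
      0 < pr mu (fun o => A o = a' /\ X o = x)) :
    expec mu (fun o =>
      (if A o = a' then (1 : Real) else 0) /
          cpr mu (fun o' => A o' = a') (fun o' => X o' = X o) *
        qhat (Z o) (A o) (X o) * (Y o - hhat (W o) (A o) (X o)) +
      (if A o = a then (1 : Real) else 0) /
          cpr mu (fun o' => A o' = a) (fun o' => X o' = X o) *
        (hhat (W o) a' (X o) -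
          Finset.univ.sum (fun v : TW => hhat v a' (X o) * pwhat v (X o))) +
      Finset.univ.sum (fun v : TW => hhat v a' (X o) * pwhat v (X o))) =
    expec mu (fun o =>
      (if A o = a then (1 : Real) else 0) /
          cpr mu (fun o' => A o' = a) (fun o' => X o' = X o) *
        hhat (W o) a' (X o)) := by
  unfold expec
  rw [← sub_eq_zero, ← Finset.sum_sub_distrib]
  have step : ∀ o : O,
      ((if A o = a' then (1 : Real) else 0) /
          cpr mu (fun o' => A o' = a') (fun o' => X o' = X o) *
        qhat (Z o) (A o) (X o) * (Y o - hhat (W o) (A o) (X o)) +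
      (if A o = a then (1 : Real) else 0) /
          cpr mu (fun o' => A o' = a) (fun o' => X o' = X o) *
        (hhat (W o) a' (X o) -
          Finset.univ.sum (fun v : TW => hhat v a' (X o) * pwhat v (X o))) +
      Finset.univ.sum (fun v : TW => hhat v a' (X o) * pwhat v (X o))) * mu o -
      ((if A o = a then (1 : Real) else 0) /
          cpr mu (fun o' => A o' = a) (fun o' => X o' = X o) *
        hhat (W o) a' (X o)) * mu o =
      ((if A o = a' then (1:ℝ) else 0) /
        cpr mu (fun o' => A o' = a') (fun o' => X o' = X o) *
        qhat (Z o) (A o) (X o) * (Y o - hhat (W o) (A o) (X o)) * mu o) +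
      ((fun x => Finset.univ.sum (fun v : TW => hhat v a' x * pwhat v x)) (X o) *
        (1 - (if A o = a then (1:ℝ) else 0) /
          cpr mu (fun o' => A o' = a) (fun o' => X o' = X o)) * mu o) := by
    intro o; ring
  rw [Finset.sum_congr rfl fun o _ => step o, Finset.sum_add_distrib,
    partA' mu hmu0 A Y Z W X a' hhat qhat (fun z x => hbridge z a' x), zero_add]
  exact partB' mu hmu0 A X a (fun x => Finset.univ.sum (fun v : TW => hhat v a' x * pwhat v x)) hpa
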